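/- Let (Ω, μ) be a probability space and T : Ω → Ω an ergodic measure-preserving transformation. Let B : Ω → GL(p, ℝ), C : Ω → GL(q, ℝ) and U : Ω → Mat(p×q, ℝ) be measurable, with ∫_Ω log⁺‖U(ω)‖ dμ(ω) < ∞, and let A(ω) ∈ GL(p+q, ℝ) be the block upper-triangular matrix with diagonal blocks B(ω), C(ω) and upper-right block U(ω). Suppose there exist λ_E ∈ ℝ and λ_F ∈ ℝ ∪ {−∞} with λ_E > λ_F such that for μ-a.e. ω: for every nonzero e ∈ ℝ^p, (1/N) log ‖B^N(ω) e‖ → λ_E, uniformly over ‖e‖ = 1 for fixed ω, and for every nonzero f ∈ ℝ^q, (1/N) log ‖C^N(ω) f‖ → λ_F, uniformly over ‖f‖ = 1 for fixed ω. Then there exists a measurable map τ : Ω → Mat(p×q, ℝ), defined for μ-a.e. ω, satisfying B(ω) τ(ω) + U(ω) = τ(Tω) C(ω) for μ-a.e. ω; consequently the graph subspaces σ(ω) := { (τ(ω) w, w) : w ∈ ℝ^q } ⊂ ℝ^{p+q} satisfy A(ω) σ(ω) = σ(Tω) and ℝ^{p+q} = (ℝ^p × {0}) ⊕ σ(ω)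 for μ-a.e. ω. -/

import Mathlib

open MeasureTheory Filter Topology

/-- The operator norm of a rectangular real matrix, with respect to Euclidean norms. -/
noncomputable def matOpNorm' {p q : ℕ} (M : Matrix (Fin p) (Fin q) ℝ) : ℝ :=
  ‖LinearMap.toContinuousLinearMap (Matrix.toEuclideanLin (𝕜 := ℝ) M)‖

/-- The cocycle iterates `M^N(ω) = M(T^{N-1} ω) ⋯ M(T ω) M(ω)`. -/
noncomputable def cocycIter {Ω : Type*} {d : ℕ} (T : Ω → Ω)
    (M : Ω → Matrix (Fin d) (Fin d) ℝ) : ℕ → Ω → Matrix (Fin d) (Fin d) ℝ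
  | 0, _ => 1
  | n + 1, ω => cocycIter T M n (T ω) * M ω

section Helpers

variable {a b c d : ℕ}

lemma teLin_mul (M : Matrix (Fin a) (Fin b) ℝ) (N : Matrix (Fin b) (Fin c) ℝ)
    (v : EuclideanSpace ℝ (Fin c)) :
    Matrix.toEuclideanLin (M * N) v = Matrix.toEuclideanLin M (Matrix.toEuclideanLin N v) := by
  simp [Matrix.toEuclideanLin_apply, Matrix.mulVec_mulVec]

lemma teLin_one (v : EuclideanSpace ℝ (Fin a)) :
    Matrix.toEuclideanLin (1 : Matrix (Fin a) (Fin a) ℝ) v = v := by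
  simp [Matrix.toEuclideanLin_apply, Matrix.one_mulVec]

lemma matOpNorm'_nonneg (M : Matrix (Fin a) (Fin b) ℝ) : 0 ≤ matOpNorm' M := norm_nonneg _

lemma norm_teLin_apply_le (M : Matrix (Fin a) (Fin b) ℝ) (v : EuclideanSpace ℝ (Fin b)) :
    ‖Matrix.toEuclideanLin M v‖ ≤ matOpNorm' M * ‖v‖ := by
  simpa [matOpNorm'] using (LinearMap.toContinuousLinearMap (Matrix.toEuclideanLin (𝕜 := ℝ) M)).le_opNorm v

lemma matOpNorm'_le (M : Matrix (Fin a) (Fin b) ℝ) {K : ℝ} (hK : 0 ≤ K)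
    (h : ∀ v : EuclideanSpace ℝ (Fin b), ‖Matrix.toEuclideanLin M v‖ ≤ K * ‖v‖) :
    matOpNorm' M ≤ K :=
  ContinuousLinearMap.opNorm_le_bound _ hK (fun v => by simpa using h v)

lemma abs_coord_le_norm (w : EuclideanSpace ℝ (Fin a)) (i : Fin a) : |w i| ≤ ‖w‖ := by
  rw [EuclideanSpace.norm_eq, ← Real.sqrt_sq_eq_abs]
  apply Real.sqrt_le_sqrt
  have := Finset.single_le_sum (f := fun j => ‖w j‖ ^ 2)
    (fun j _ => sq_nonneg _) (Finset.mem_univ i)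
  simpa [Real.norm_eq_abs, sq_abs] using this

lemma abs_entry_le_matOpNorm' (M : Matrix (Fin a) (Fin b) ℝ) (i : Fin a) (j : Fin b) :
    |M i j| ≤ matOpNorm' M := by
  have h1 : Matrix.toEuclideanLin M (EuclideanSpace.single j (1:ℝ)) i = M i j := by
    rw [Matrix.toEuclideanLin_apply]
    show (Matrix.mulVec M (WithLp.equiv 2 _ (EuclideanSpace.single j (1:ℝ)))) i = M i j
    simp [Matrix.mulVec_single]
  calc |M i j| = |Matrix.toEuclideanLin M (EuclideanSpace.single j (1:ℝ)) i| := by rw [h1]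
    _ ≤ ‖Matrix.toEuclideanLin M (EuclideanSpace.single j (1:ℝ))‖ :=
        abs_coord_le_norm _ i
    _ ≤ matOpNorm' M * ‖EuclideanSpace.single j (1:ℝ)‖ := norm_teLin_apply_le _ _
    _ = matOpNorm' M := by simp [EuclideanSpace.norm_single]

end Helpers
section Helpers2

variable {Ω : Type*} [MeasurableSpace Ω] {a b c d : ℕ}

lemma measurable_det {f : Ω → Matrix (Fin a) (Fin a) ℝ}
    (hf : ∀ i j, Measurable fun ω => f ω i j) :
    Measurable fun ω => (f ω).det := by
  simp_rw [Matrix.det_apply']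
  exact Finset.measurable_sum _ fun σ _ =>
    (Finset.measurable_prod _ fun i _ => hf _ _).const_mul _

lemma measurable_inv_entry {f : Ω → Matrix (Fin a) (Fin a) ℝ}
    (hf : ∀ i j, Measurable fun ω => f ω i j) (i j : Fin a) :
    Measurable fun ω => (f ω)⁻¹ i j := by
  simp_rw [Matrix.inv_def, Matrix.smul_apply, Ring.inverse_eq_inv', smul_eq_mul,
    Matrix.adjugate_apply]
  refine ((measurable_det hf).inv).mul (measurable_det fun k l => ?_)
  simp_rw [Matrix.updateRow_apply]
  split_ifs with h
  · exact measurable_const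
  · exact hf k l

lemma measurable_mul_entry {f : Ω → Matrix (Fin a) (Fin b) ℝ} {g : Ω → Matrix (Fin b) (Fin c) ℝ}
    (hf : ∀ i j, Measurable fun ω => f ω i j) (hg : ∀ i j, Measurable fun ω => g ω i j)
    (i : Fin a) (j : Fin c) :
    Measurable fun ω => (f ω * g ω) i j := by
  simp_rw [Matrix.mul_apply]
  exact Finset.measurable_sum _ fun k _ => (hf i k).mul (hg k j)

lemma measurable_cocycIter_entry {T : Ω → Ω} (hT : Measurable T)
    {M : Ω → Matrix (Fin d) (Fin d) ℝ}
    (hM : ∀ i j, Measurable fun ω => M ω i j) (n : ℕ) (i j : Fin d) :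
    Measurable fun ω => cocycIter T M n ω i j := by
  induction n generalizing i j with
  | zero =>
    simp only [cocycIter]
    exact measurable_const
  | succ n ih =>
    show Measurable fun ω => (cocycIter T M n (T ω) * M ω) i j
    simp_rw [Matrix.mul_apply]
    exact Finset.measurable_sum _ fun k _ => ((ih i k).comp hT).mul (hM k j)

omit [MeasurableSpace Ω] in
lemma isUnit_cocycIter {T : Ω → Ω} (M : Ω → Matrix.GeneralLinearGroup (Fin d) ℝ) (n : ℕ)
    (ω : Ω) : IsUnit (cocycIter T (fun ω' => (M ω' : Matrix (Fin d) (Fin d) ℝ)) n ω) := by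
  induction n generalizing ω with
  | zero => exact isUnit_one
  | succ n ih => exact (ih (T ω)).mul ⟨M ω, rfl⟩

lemma teLin_mul_inv_apply {M : Matrix (Fin d) (Fin d) ℝ} (h : IsUnit M)
    (v : EuclideanSpace ℝ (Fin d)) :
    Matrix.toEuclideanLin M (Matrix.toEuclideanLin M⁻¹ v) = v := by
  rw [← teLin_mul, Matrix.mul_nonsing_inv _ ((Matrix.isUnit_iff_isUnit_det M).mp h), teLin_one]

lemma hasSum_matMulLeft {f : ℕ → Matrix (Fin a) (Fin b) ℝ} {S : Matrix (Fin a) (Fin b) ℝ}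
    (A : Matrix (Fin c) (Fin a) ℝ) (h : HasSum f S) :
    HasSum (fun n => A * f n) (A * S) := by
  have hc : Continuous fun X : Matrix (Fin a) (Fin b) ℝ => A * X :=
    continuous_const.matrix_mul continuous_id
  exact h.map (AddMonoidHom.mk' (fun X : Matrix (Fin a) (Fin b) ℝ => A * X) (Matrix.mul_add A)) hc

lemma hasSum_matMulRight {f : ℕ → Matrix (Fin a) (Fin b) ℝ} {S : Matrix (Fin a) (Fin b) ℝ}
    (A : Matrix (Fin b) (Fin c) ℝ) (h : HasSum f S) :
    HasSum (fun n => f n * A) (S * A) := by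
  have hc : Continuous fun X : Matrix (Fin a) (Fin b) ℝ => X * A :=
    continuous_id.matrix_mul continuous_const
  exact h.map (AddMonoidHom.mk' (fun X : Matrix (Fin a) (Fin b) ℝ => X * A) (fun X Y => Matrix.add_mul X Y A)) hc

end Helpers2
section BC

open ENNReal

variable {Ω : Type*} [MeasurableSpace Ω] {μ : Measure Ω}

lemma tsum_meas_level_ne_top {g : Ω → ℝ} (hg : Measurable g) (hgi : Integrable g μ)
    (hg0 : ∀ ω, 0 ≤ g ω) {ε : ℝ} (hε : 0 < ε) :
    ∑' n : ℕ, μ {ω | ε * (n + 1) ≤ g ω} ≠ ∞ := by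
  have hmeas : ∀ n : ℕ, MeasurableSet {ω | ε * (n + 1) ≤ g ω} := fun n =>
    measurableSet_le measurable_const hg
  have key : ∀ N : ℕ, ∑ n ∈ Finset.range N, μ {ω | ε * (n + 1) ≤ g ω}
      ≤ ∫⁻ ω, ENNReal.ofReal (g ω / ε) ∂μ := by
    intro N
    have h1 : ∀ n ∈ Finset.range N, μ {ω | ε * (n + 1) ≤ g ω}
        = ∫⁻ ω, Set.indicator {ω | ε * (n + 1) ≤ g ω} (fun _ => (1:ℝ≥0∞)) ω ∂μ := by
      intro n _
      rw [lintegral_indicator (hmeas n)]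
      simp
    rw [Finset.sum_congr rfl h1, ← lintegral_finset_sum']
    · refine lintegral_mono fun ω => ?_
      have hcount : (∑ n ∈ Finset.range N,
          Set.indicator {ω | ε * (n + 1) ≤ g ω} (fun _ => (1:ℝ≥0∞)) ω)
          = ((Finset.range N).filter (fun n : ℕ => ε * ((n:ℝ) + 1) ≤ g ω)).card := by
        rw [Finset.card_filter]
        push_cast
        refine Finset.sum_congr rfl fun n _ => ?_
        by_cases h : ε * (n + 1) ≤ g ω <;> simp [Set.indicator, h]
      rw [hcount]
      have hsub : (Finset.range N).filter (fun n : ℕ => ε * ((n:ℝ) + 1) ≤ g ω)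
          ⊆ Finset.range (Nat.floor (g ω / ε)) := by
        intro n hn
        rw [Finset.mem_filter] at hn
        rw [Finset.mem_range]
        have : ((n:ℝ) + 1) ≤ g ω / ε := by
          rw [le_div_iff₀ hε]
          linarith [hn.2]
        have h2 : n + 1 ≤ Nat.floor (g ω / ε) := Nat.le_floor (by exact_mod_cast this)
        omega
      calc (((Finset.range N).filter (fun n : ℕ => ε * ((n:ℝ) + 1) ≤ g ω)).card : ℝ≥0∞)
          ≤ ((Nat.floor (g ω / ε) : ℕ) : ℝ≥0∞) := by
            exact_mod_cast Nat.cast_le.mpr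
              (le_trans (Finset.card_le_card hsub) (le_of_eq (Finset.card_range _)))
        _ ≤ ENNReal.ofReal (g ω / ε) := by
            rw [← ENNReal.ofReal_natCast]
            exact ENNReal.ofReal_le_ofReal (Nat.floor_le (div_nonneg (hg0 ω) hε.le))
    · exact fun n _ => (measurable_const.indicator (hmeas n)).aemeasurable
  have hfin : ∫⁻ ω, ENNReal.ofReal (g ω / ε) ∂μ < ∞ := by
    simpa [div_eq_mul_inv] using (hgi.mul_const ε⁻¹).lintegral_lt_top
  refine ne_of_lt (lt_of_le_of_lt ?_ hfin)
  rw [ENNReal.tsum_eq_iSup_nat]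
  exact iSup_le key

lemma ae_eventually_iterate_lt {T : Ω → Ω} (hTm : MeasurePreserving T μ μ) {g : Ω → ℝ}
    (hg : Measurable g) (hgi : Integrable g μ) (hg0 : ∀ ω, 0 ≤ g ω) {ε : ℝ} (hε : 0 < ε) :
    ∀ᵐ ω ∂μ, ∀ᶠ n : ℕ in atTop, g (T^[n] ω) < ε * (n + 1) := by
  have hmeas : ∀ n : ℕ, MeasurableSet {ω | ε * (n + 1) ≤ g ω} := fun n =>
    measurableSet_le measurable_const hg
  have hsum : ∑' n : ℕ, μ {ω | ε * (n + 1) ≤ g (T^[n] ω)} ≠ ∞ := by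
    have heq : ∀ n : ℕ, μ {ω | ε * (n + 1) ≤ g (T^[n] ω)} = μ {ω | ε * (n + 1) ≤ g ω} := by
      intro n
      exact (hTm.iterate n).measure_preimage (hmeas n).nullMeasurableSet
    rw [tsum_congr heq]
    exact tsum_meas_level_ne_top hg hgi hg0 hε
  have h0 := MeasureTheory.measure_setOf_frequently_eq_zero
    (p := fun n ω => ε * (n + 1) ≤ g (T^[n] ω)) hsum
  have h0' : ∀ᵐ ω ∂μ, ¬ ∃ᶠ n : ℕ in atTop, ε * ((n:ℝ) + 1) ≤ g (T^[n] ω) :=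
    MeasureTheory.ae_iff.mpr (by
      convert h0 using 3
      funext x
      simp [not_not, Filter.frequently_atTop])
  filter_upwards [h0'] with ω hω
  rw [Filter.not_frequently] at hω
  filter_upwards [hω] with n hn
  exact lt_of_not_ge hn

end BC
/-- The linear map `w ↦ (τ w, w)` from `ℝ^q` to `ℝ^{p+q} = ℝ^p ⊕ ℝ^q`, whose range is the
graph subspace `σ = {(τ w, w) : w ∈ ℝ^q}`. -/
noncomputable def graphMap {p q : ℕ} (τ : Matrix (Fin p) (Fin q) ℝ) :
    (Fin q → ℝ) →ₗ[ℝ] ((Fin p ⊕ Fin q) → ℝ) where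
  toFun w := Sum.elim (τ.mulVec w) w
  map_add' w w' := by
    funext x
    cases x <;> simp [Matrix.mulVec_add]
  map_smul' c w := by
    funext x
    cases x <;> simp [Matrix.mulVec_smul]

/-- The subspace `ℝ^p × {0}` of `ℝ^{p+q}`. -/
noncomputable def firstFactor (p q : ℕ) : Submodule ℝ ((Fin p ⊕ Fin q) → ℝ) :=
  LinearMap.ker (LinearMap.funLeft ℝ ℝ (Sum.inr : Fin q → Fin p ⊕ Fin q))
section Graph

open scoped Matrix

variable {p q : ℕ}

lemma splitting_algebra (Bm : Matrix (Fin p) (Fin p) ℝ) (Cm : Matrix (Fin q) (Fin q) ℝ)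
    (hCu : IsUnit Cm) (Um τ1 τ2 : Matrix (Fin p) (Fin q) ℝ)
    (heq : Bm * τ1 + Um = τ2 * Cm) :
    (LinearMap.range (graphMap τ1)).map
        (Matrix.mulVecLin (Matrix.fromBlocks Bm Um 0 Cm))
      = LinearMap.range (graphMap τ2) ∧
    IsCompl (firstFactor p q) (LinearMap.range (graphMap τ1)) := by
  have hCd : IsUnit Cm.det := (Matrix.isUnit_iff_isUnit_det Cm).mp hCu
  constructor
  · have hcomp : (Matrix.mulVecLin (Matrix.fromBlocks Bm Um 0 Cm)).comp (graphMap τ1)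
        = (graphMap τ2).comp (Matrix.mulVecLin Cm) := by
      apply LinearMap.ext; intro w
      show (Matrix.fromBlocks Bm Um 0 Cm) *ᵥ (Sum.elim (τ1 *ᵥ w) w)
        = Sum.elim (τ2 *ᵥ (Cm *ᵥ w)) (Cm *ᵥ w)
      rw [Matrix.fromBlocks_mulVec]
      simp only [Sum.elim_comp_inl, Sum.elim_comp_inr, Matrix.zero_mulVec, zero_add,
        Matrix.mulVec_mulVec, ← Matrix.add_mulVec, heq, Matrix.zero_mul]
    have hsurj : LinearMap.range (Matrix.mulVecLin Cm) = ⊤ := by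
      rw [LinearMap.range_eq_top]
      intro y
      refine ⟨Cm⁻¹ *ᵥ y, ?_⟩
      rw [Matrix.mulVecLin_apply, Matrix.mulVec_mulVec, Matrix.mul_nonsing_inv _ hCd,
        Matrix.one_mulVec]
    rw [← LinearMap.range_comp, hcomp, LinearMap.range_comp, hsurj, Submodule.map_top]
  · rw [isCompl_iff]
    constructor
    · rw [Submodule.disjoint_def]
      intro x hx1 hx2
      obtain ⟨w, rfl⟩ := hx2
      have hw : w = 0 := by
        funext j
        have := congrFun (LinearMap.mem_ker.mp hx1) j
        simpa [LinearMap.funLeft_apply, graphMap] using this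
      rw [hw, map_zero]
    · rw [codisjoint_iff, eq_top_iff]
      intro x _
      set w : Fin q → ℝ := fun j => x (Sum.inr j) with hw
      rw [Submodule.mem_sup]
      refine ⟨x - graphMap τ1 w, ?_, graphMap τ1 w, ⟨w, rfl⟩, by abel⟩
      rw [firstFactor, LinearMap.mem_ker]
      funext j
      simp [LinearMap.funLeft_apply, graphMap, hw]

end Graph
section Helpers3

variable {a b c d : ℕ} {Ω : Type*}

lemma isUnit_cocycIter' {T : Ω → Ω} {M : Ω → Matrix (Fin d) (Fin d) ℝ}
    (h : ∀ ω, IsUnit (M ω)) (n : ℕ) (ω : Ω) : IsUnit (cocycIter T M n ω) := by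
  induction n generalizing ω with
  | zero => exact isUnit_one
  | succ n ih => exact (ih (T ω)).mul (h ω)

lemma teLin_inv_mul_apply {M : Matrix (Fin d) (Fin d) ℝ} (h : IsUnit M)
    (v : EuclideanSpace ℝ (Fin d)) :
    Matrix.toEuclideanLin M⁻¹ (Matrix.toEuclideanLin M v) = v := by
  rw [← teLin_mul, Matrix.nonsing_inv_mul _ ((Matrix.isUnit_iff_isUnit_det M).mp h), teLin_one]

lemma matOpNorm'_le_of_unit {M : Matrix (Fin a) (Fin b) ℝ} {K : ℝ} (hK : 0 ≤ K)
    (h : ∀ v : EuclideanSpace ℝ (Fin b), ‖v‖ = 1 → ‖Matrix.toEuclideanLin M v‖ ≤ K) :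
    matOpNorm' M ≤ K := by
  refine matOpNorm'_le M hK fun v => ?_
  rcases eq_or_ne v 0 with rfl | hv
  · simp
  · have hv0 : 0 < ‖v‖ := norm_pos_iff.mpr hv
    have h2 := h _ (norm_smul_inv_norm (𝕜 := ℝ) hv)
    rw [LinearMap.map_smul, norm_smul] at h2
    simp only [norm_inv, RCLike.norm_ofReal, abs_inv, abs_norm] at h2
    have h3 := mul_le_mul_of_nonneg_left h2 hv0.le
    calc ‖Matrix.toEuclideanLin M v‖
        = ‖v‖ * (‖v‖⁻¹ * ‖Matrix.toEuclideanLin M v‖) := by field_simp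
      _ ≤ ‖v‖ * K := h3
      _ = K * ‖v‖ := mul_comm _ _

lemma le_norm_teLin_of_unit {M : Matrix (Fin a) (Fin b) ℝ} {K : ℝ}
    (h : ∀ v : EuclideanSpace ℝ (Fin b), ‖v‖ = 1 → K ≤ ‖Matrix.toEuclideanLin M v‖)
    (v : EuclideanSpace ℝ (Fin b)) : K * ‖v‖ ≤ ‖Matrix.toEuclideanLin M v‖ := by
  rcases eq_or_ne v 0 with rfl | hv
  · simp
  · have hv0 : 0 < ‖v‖ := norm_pos_iff.mpr hv
    have h2 := h _ (norm_smul_inv_norm (𝕜 := ℝ) hv)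
    rw [LinearMap.map_smul, norm_smul] at h2
    simp only [norm_inv, RCLike.norm_ofReal, abs_inv, abs_norm] at h2
    have h3 := mul_le_mul_of_nonneg_left h2 hv0.le
    calc K * ‖v‖ = ‖v‖ * K := mul_comm _ _
      _ ≤ ‖v‖ * (‖v‖⁻¹ * ‖Matrix.toEuclideanLin M v‖) := h3
      _ = ‖Matrix.toEuclideanLin M v‖ := by field_simp

end Helpers3
section Main

open Matrix

variable {Ω : Type*} {p q : ℕ}

/-- The terms of the series defining `τ`. -/
noncomputable def Fterm (T : Ω → Ω) (B' : Ω → Matrix (Fin p) (Fin p) ℝ)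
    (C' : Ω → Matrix (Fin q) (Fin q) ℝ) (U : Ω → Matrix (Fin p) (Fin q) ℝ)
    (n : ℕ) (ω : Ω) : Matrix (Fin p) (Fin q) ℝ :=
  (cocycIter T B' (n + 1) ω)⁻¹ * (U (T^[n] ω) * cocycIter T C' n ω)

/-- The candidate map `τ`, defined via `limsup` so that it is everywhere defined
and measurable, and agrees with `-∑' n, Fterm n ω` whenever the series converges. -/
noncomputable def tauDef (T : Ω → Ω) (B' : Ω → Matrix (Fin p) (Fin p) ℝ)
    (C' : Ω → Matrix (Fin q) (Fin q) ℝ) (U : Ω → Matrix (Fin p) (Fin q) ℝ)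
    (ω : Ω) : Matrix (Fin p) (Fin q) ℝ :=
  Matrix.of fun i j =>
    -(Filter.limsup (fun N : ℕ =>
        ((∑ n ∈ Finset.range N, Fterm T B' C' U n ω i j : ℝ) : EReal)) atTop).toReal

lemma tauDef_measurable [MeasurableSpace Ω] {T : Ω → Ω} (hTm : Measurable T)
    {B' : Ω → Matrix (Fin p) (Fin p) ℝ} {C' : Ω → Matrix (Fin q) (Fin q) ℝ}
    {U : Ω → Matrix (Fin p) (Fin q) ℝ}
    (hBm : ∀ i j, Measurable fun ω => B' ω i j)
    (hCm : ∀ i j, Measurable fun ω => C' ω i j)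
    (hUm : ∀ i j, Measurable fun ω => U ω i j)
    (i : Fin p) (j : Fin q) :
    Measurable fun ω => tauDef T B' C' U ω i j := by
  have hFm : ∀ n (i : Fin p) (j : Fin q), Measurable fun ω => Fterm T B' C' U n ω i j := by
    intro n i j
    exact measurable_mul_entry
      (measurable_inv_entry (measurable_cocycIter_entry hTm hBm (n + 1)))
      (measurable_mul_entry (fun i j => (hUm i j).comp (hTm.iterate n))
        (measurable_cocycIter_entry hTm hCm n)) i j
  apply Measurable.neg
  apply Measurable.ereal_toReal
  apply Measurable.limsup
  intro N
  exact Measurable.coe_real_ereal (Finset.measurable_sum _ fun n _ => hFm n i j)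

lemma tauDef_eq_of_hasSum {T : Ω → Ω} {B' : Ω → Matrix (Fin p) (Fin p) ℝ}
    {C' : Ω → Matrix (Fin q) (Fin q) ℝ} {U : Ω → Matrix (Fin p) (Fin q) ℝ} {ω : Ω}
    {S : Matrix (Fin p) (Fin q) ℝ} (hS : HasSum (fun n => Fterm T B' C' U n ω) S) :
    tauDef T B' C' U ω = -S := by
  ext i j
  have hent : HasSum (fun n => Fterm T B' C' U n ω i j) (S i j) :=
    Pi.hasSum.mp (Pi.hasSum.mp hS i) j
  have htd : Filter.Tendsto (fun N : ℕ => ∑ n ∈ Finset.range N, Fterm T B' C' U n ω i j)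
      atTop (𝓝 (S i j)) := hent.tendsto_sum_nat
  have htd' : Filter.Tendsto (fun N : ℕ =>
      ((∑ n ∈ Finset.range N, Fterm T B' C' U n ω i j : ℝ) : EReal)) atTop (𝓝 ((S i j : ℝ) : EReal)) :=
    (continuous_coe_real_ereal.tendsto _).comp htd
  simp only [tauDef, Matrix.of_apply, Matrix.neg_apply]
  rw [htd'.limsup_eq, EReal.toReal_coe]

lemma summable_Fterm {T : Ω → Ω} {B' : Ω → Matrix (Fin p) (Fin p) ℝ}
    {C' : Ω → Matrix (Fin q) (Fin q) ℝ} {U : Ω → Matrix (Fin p) (Fin q) ℝ} {ω : Ω}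
    {bexp aexp eexp : ℝ} (hgap : aexp + eexp - bexp < 0)
    (h1 : ∀ᶠ n : ℕ in atTop, ∀ v : EuclideanSpace ℝ (Fin p),
      ‖Matrix.toEuclideanLin ((cocycIter T B' n ω)⁻¹) v‖ ≤ Real.exp (-(bexp * n)) * ‖v‖)
    (h2 : ∀ᶠ n : ℕ in atTop, matOpNorm' (cocycIter T C' n ω) ≤ Real.exp (aexp * n))
    (h3 : ∀ᶠ n : ℕ in atTop, matOpNorm' (U (T^[n] ω)) ≤ Real.exp (eexp * n)) :
    Summable (fun n => Fterm T B' C' U n ω) := by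
  have h1' : ∀ᶠ n : ℕ in atTop, ∀ v : EuclideanSpace ℝ (Fin p),
      ‖Matrix.toEuclideanLin ((cocycIter T B' (n + 1) ω)⁻¹) v‖
        ≤ Real.exp (-(bexp * ((n : ℝ) + 1))) * ‖v‖ := by
    rw [eventually_atTop] at h1 ⊢
    obtain ⟨N, hN⟩ := h1
    refine ⟨N, fun n hn => ?_⟩
    have := hN (n + 1) (le_trans hn (Nat.le_succ n))
    intro v
    have h := this v
    rwa [Nat.cast_add, Nat.cast_one] at h
  have hb : ∀ᶠ n : ℕ in atTop, matOpNorm' (Fterm T B' C' U n ω)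
      ≤ Real.exp (-bexp) * Real.exp (aexp + eexp - bexp) ^ n := by
    filter_upwards [h1', h2, h3] with n hn1 hn2 hn3
    have key : ∀ v : EuclideanSpace ℝ (Fin q),
        ‖Matrix.toEuclideanLin (Fterm T B' C' U n ω) v‖
          ≤ (Real.exp (-(bexp * ((n : ℝ) + 1))) * (Real.exp (eexp * n) * Real.exp (aexp * n)))
            * ‖v‖ := by
      intro v
      rw [Fterm, teLin_mul, teLin_mul]
      have s1 : ‖Matrix.toEuclideanLin (cocycIter T C' n ω) v‖ ≤ Real.exp (aexp * n) * ‖v‖ :=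
        le_trans (norm_teLin_apply_le _ _) (mul_le_mul_of_nonneg_right hn2 (norm_nonneg _))
      have s2 : ‖Matrix.toEuclideanLin (U (T^[n] ω))
          (Matrix.toEuclideanLin (cocycIter T C' n ω) v)‖
          ≤ Real.exp (eexp * n) * (Real.exp (aexp * n) * ‖v‖) := by
        refine le_trans (norm_teLin_apply_le _ _) ?_
        exact mul_le_mul hn3 s1 (norm_nonneg _) (Real.exp_nonneg _)
      have s3 := hn1 (Matrix.toEuclideanLin (U (T^[n] ω))
        (Matrix.toEuclideanLin (cocycIter T C' n ω) v))
      refine le_trans s3 ?_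
      calc Real.exp (-(bexp * ((n : ℝ) + 1))) * ‖Matrix.toEuclideanLin (U (T^[n] ω))
              (Matrix.toEuclideanLin (cocycIter T C' n ω) v)‖
          ≤ Real.exp (-(bexp * ((n : ℝ) + 1)))
              * (Real.exp (eexp * n) * (Real.exp (aexp * n) * ‖v‖)) :=
            mul_le_mul_of_nonneg_left s2 (Real.exp_nonneg _)
        _ = (Real.exp (-(bexp * ((n : ℝ) + 1))) * (Real.exp (eexp * n) * Real.exp (aexp * n)))
              * ‖v‖ := by ring
    have hopn := matOpNorm'_le _ (by positivity) key
    refine le_trans hopn (le_of_eq ?_)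
    rw [← Real.exp_nat_mul, ← Real.exp_add, ← Real.exp_add, ← Real.exp_add]
    exact congrArg Real.exp (by ring)
  have hc : Summable (fun n : ℕ => Real.exp (-bexp) * Real.exp (aexp + eexp - bexp) ^ n) :=
    (summable_geometric_of_lt_one (Real.exp_nonneg _)
      (Real.exp_lt_one_iff.mpr hgap)).mul_left _
  have hent : ∀ (i : Fin p) (j : Fin q), Summable fun n => Fterm T B' C' U n ω i j := by
    intro i j
    apply summable_of_isBigO_nat hc
    apply Asymptotics.IsBigO.of_bound 1
    filter_upwards [hb] with n hn
    rw [one_mul, Real.norm_eq_abs, Real.norm_eq_abs]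
    have habs := abs_entry_le_matOpNorm' (Fterm T B' C' U n ω) i j
    have h0 : (0:ℝ) ≤ Real.exp (-bexp) * Real.exp (aexp + eexp - bexp) ^ n := by positivity
    rw [abs_of_nonneg h0]
    exact le_trans habs hn
  exact Pi.summable.mpr fun i => Pi.summable.mpr fun j => hent i j

lemma cohomology_eq {T : Ω → Ω} {B' : Ω → Matrix (Fin p) (Fin p) ℝ}
    {C' : Ω → Matrix (Fin q) (Fin q) ℝ} {U : Ω → Matrix (Fin p) (Fin q) ℝ} {ω : Ω}
    (hBu : ∀ ω', IsUnit (B' ω')) {S1 S2 : Matrix (Fin p) (Fin q) ℝ}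
    (hS1 : HasSum (fun n => Fterm T B' C' U n ω) S1)
    (hS2 : HasSum (fun n => Fterm T B' C' U n (T ω)) S2) :
    B' ω * (-S1) + U ω = (-S2) * C' ω := by
  have hdet : IsUnit (B' ω).det := (Matrix.isUnit_iff_isUnit_det _).mp (hBu ω)
  -- left multiplication by B' ω
  have h1 : HasSum (fun n => B' ω * Fterm T B' C' U n ω) (B' ω * S1) :=
    hasSum_matMulLeft _ hS1
  have hH : ∀ n, B' ω * Fterm T B' C' U n ω
      = (cocycIter T B' n (T ω))⁻¹ * (U (T^[n] ω) * cocycIter T C' n ω) := by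
    intro n
    have hc : cocycIter T B' (n + 1) ω = cocycIter T B' n (T ω) * B' ω := rfl
    rw [Fterm, hc, Matrix.mul_inv_rev]
    simp only [← Matrix.mul_assoc]
    rw [Matrix.mul_nonsing_inv _ hdet, Matrix.one_mul, Matrix.mul_assoc]
  rw [funext hH] at h1
  -- right multiplication by C' ω
  have h2 : HasSum (fun n => Fterm T B' C' U n (T ω) * C' ω) (S2 * C' ω) :=
    hasSum_matMulRight _ hS2
  have hshift : ∀ n, Fterm T B' C' U n (T ω) * C' ω
      = (cocycIter T B' (n + 1) (T ω))⁻¹ * (U (T^[n + 1] ω) * cocycIter T C' (n + 1) ω) := by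
    intro n
    have hit : T^[n] (T ω) = T^[n + 1] ω := (Function.iterate_succ_apply T n ω).symm
    have hcc : cocycIter T C' (n + 1) ω = cocycIter T C' n (T ω) * C' ω := rfl
    rw [Fterm, hit, hcc, Matrix.mul_assoc, Matrix.mul_assoc]
  rw [funext hshift] at h2
  -- shift the index
  have h0 : (∑ i ∈ Finset.range 1,
      (cocycIter T B' i (T ω))⁻¹ * (U (T^[i] ω) * cocycIter T C' i ω)) = U ω := by
    simp [cocycIter, inv_one]
  have h2' : HasSum (fun n => (cocycIter T B' (n + 1) (T ω))⁻¹
      * (U (T^[n + 1] ω) * cocycIter T C' (n + 1) ω))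
      (S2 * C' ω + U ω - ∑ i ∈ Finset.range 1,
        (cocycIter T B' i (T ω))⁻¹ * (U (T^[i] ω) * cocycIter T C' i ω)) := by
    rw [h0]
    simpa using h2
  have h3 : HasSum (fun n => (cocycIter T B' n (T ω))⁻¹ * (U (T^[n] ω) * cocycIter T C' n ω))
      (S2 * C' ω + U ω) := (hasSum_nat_add_iff' 1).mp h2'
  have huniq : B' ω * S1 = S2 * C' ω + U ω := h1.unique h3
  rw [Matrix.mul_neg, Matrix.neg_mul, huniq]
  abel

end Main
/-- **Unusual growth implies splitting.** -/
theorem unusual_growth_implies_splitting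
    {Ω : Type*} [MeasurableSpace Ω] {μ : Measure Ω} [IsProbabilityMeasure μ]
    {T : Ω → Ω} (hT : Ergodic T μ) {p q : ℕ}
    (B : Ω → Matrix.GeneralLinearGroup (Fin p) ℝ)
    (C : Ω → Matrix.GeneralLinearGroup (Fin q) ℝ)
    (U : Ω → Matrix (Fin p) (Fin q) ℝ)
    (hBmeas : ∀ i j, Measurable fun ω => (B ω : Matrix (Fin p) (Fin p) ℝ) i j)
    (hCmeas : ∀ i j, Measurable fun ω => (C ω : Matrix (Fin q) (Fin q) ℝ) i j)
    (hUmeas : ∀ i j, Measurable fun ω => U ω i j)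
    (hUint : Integrable (fun ω => max (Real.log (matOpNorm' (U ω))) 0) μ)
    (lamE : ℝ) (lamF : EReal) (hlamF : lamF ≠ ⊤) (hlt : lamF < (lamE : EReal))
    (hB : ∀ᵐ ω ∂μ,
      (∀ e : EuclideanSpace ℝ (Fin p), e ≠ 0 →
        Tendsto (fun N : ℕ =>
            Real.log ‖Matrix.toEuclideanLin (cocycIter T (fun ω' =>
              (B ω' : Matrix (Fin p) (Fin p) ℝ)) N ω) e‖ / (N : ℝ))
          atTop (𝓝 lamE)) ∧
      (∀ ε > (0:ℝ), ∀ᶠ N : ℕ in atTop, ∀ e : EuclideanSpace ℝ (Fin p), ‖e‖ = 1 →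
        |Real.log ‖Matrix.toEuclideanLin (cocycIter T (fun ω' =>
            (B ω' : Matrix (Fin p) (Fin p) ℝ)) N ω) e‖ / (N : ℝ) - lamE| < ε))
    (hC : ∀ᵐ ω ∂μ,
      (∀ f : EuclideanSpace ℝ (Fin q), f ≠ 0 →
        Tendsto (fun N : ℕ =>
            ((Real.log ‖Matrix.toEuclideanLin (cocycIter T (fun ω' =>
              (C ω' : Matrix (Fin q) (Fin q) ℝ)) N ω) f‖ / (N : ℝ) : ℝ) : EReal))
          atTop (𝓝 lamF)) ∧
      (∀ V : Set EReal, V ∈ 𝓝 lamF →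
        ∀ᶠ N : ℕ in atTop, ∀ f : EuclideanSpace ℝ (Fin q), ‖f‖ = 1 →
          ((Real.log ‖Matrix.toEuclideanLin (cocycIter T (fun ω' =>
              (C ω' : Matrix (Fin q) (Fin q) ℝ)) N ω) f‖ / (N : ℝ) : ℝ) : EReal) ∈ V)) :
    ∃ τ : Ω → Matrix (Fin p) (Fin q) ℝ,
      (∀ i j, Measurable fun ω => τ ω i j) ∧
      (∀ᵐ ω ∂μ,
        (B ω : Matrix (Fin p) (Fin p) ℝ) * τ ω + U ω
          = τ (T ω) * (C ω : Matrix (Fin q) (Fin q) ℝ)) ∧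
      (∀ᵐ ω ∂μ,
        (LinearMap.range (graphMap (τ ω))).map
            (Matrix.mulVecLin
              (Matrix.fromBlocks (B ω : Matrix (Fin p) (Fin p) ℝ) (U ω)
                0 (C ω : Matrix (Fin q) (Fin q) ℝ)))
          = LinearMap.range (graphMap (τ (T ω))) ∧
        IsCompl (firstFactor p q) (LinearMap.range (graphMap (τ ω)))) := by
  classical
  have hTm : Measurable T := hT.toMeasurePreserving.measurable
  obtain ⟨a, ha1, ha2'⟩ := EReal.exists_between_coe_real hlt
  have ha2 : a < lamE := EReal.coe_lt_coe_iff.mp ha2'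
  set ε₀ : ℝ := (lamE - a) / 3 with hε₀def
  have hε₀ : 0 < ε₀ := by rw [hε₀def]; linarith
  set bexp : ℝ := lamE - ε₀ with hbexpdef
  -- the three a.e. eventual bounds
  have hP1 : ∀ᵐ ω ∂μ, ∀ᶠ n : ℕ in atTop, ∀ v : EuclideanSpace ℝ (Fin p),
      ‖Matrix.toEuclideanLin ((cocycIter T (fun ω' =>
        (B ω' : Matrix (Fin p) (Fin p) ℝ)) n ω)⁻¹) v‖ ≤ Real.exp (-(bexp * n)) * ‖v‖ := by
    filter_upwards [hB] with ω hω
    filter_upwards [hω.2 ε₀ hε₀, eventually_ge_atTop 1] with n hn hn1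
    have hnR : (0:ℝ) < n := by exact_mod_cast hn1
    set Mn := cocycIter T (fun ω' => (B ω' : Matrix (Fin p) (Fin p) ℝ)) n ω with hMn
    have hunit : IsUnit Mn := isUnit_cocycIter' (fun ω' => ⟨B ω', rfl⟩) n ω
    have hlow : ∀ e : EuclideanSpace ℝ (Fin p), ‖e‖ = 1 →
        Real.exp (bexp * n) ≤ ‖Matrix.toEuclideanLin Mn e‖ := by
      intro e he
      have hne : e ≠ 0 := by
        intro h; rw [h] at he; simp at he
      have hpos : 0 < ‖Matrix.toEuclideanLin Mn e‖ := by
        rw [norm_pos_iff]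
        intro h0
        have hinv := teLin_inv_mul_apply hunit e
        rw [h0, map_zero] at hinv
        exact hne hinv.symm
      have habs := hn e he
      rw [abs_lt] at habs
      have hdiv : bexp < Real.log ‖Matrix.toEuclideanLin Mn e‖ / n := by
        rw [hbexpdef]; linarith [habs.1]
      have hlog : bexp * n < Real.log ‖Matrix.toEuclideanLin Mn e‖ :=
        (lt_div_iff₀ hnR).mp hdiv
      have := Real.exp_lt_exp.mpr hlog
      rw [Real.exp_log hpos] at this
      exact this.le
    have hge := le_norm_teLin_of_unit hlow
    intro v
    have hEpos : (0:ℝ) < Real.exp (bexp * n) := Real.exp_pos _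
    have hvw : Matrix.toEuclideanLin Mn (Matrix.toEuclideanLin Mn⁻¹ v) = v :=
      teLin_mul_inv_apply hunit v
    have hle : Real.exp (bexp * n) * ‖Matrix.toEuclideanLin Mn⁻¹ v‖ ≤ ‖v‖ := by
      have := hge (Matrix.toEuclideanLin Mn⁻¹ v)
      rwa [hvw] at this
    calc ‖Matrix.toEuclideanLin Mn⁻¹ v‖
        = (Real.exp (bexp * n))⁻¹ * (Real.exp (bexp * n) * ‖Matrix.toEuclideanLin Mn⁻¹ v‖) := by
          field_simp
      _ ≤ (Real.exp (bexp * n))⁻¹ * ‖v‖ :=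
          mul_le_mul_of_nonneg_left hle (inv_nonneg.mpr hEpos.le)
      _ = Real.exp (-(bexp * n)) * ‖v‖ := by rw [Real.exp_neg]
  have hP2 : ∀ᵐ ω ∂μ, ∀ᶠ n : ℕ in atTop, matOpNorm' (cocycIter T (fun ω' =>
      (C ω' : Matrix (Fin q) (Fin q) ℝ)) n ω) ≤ Real.exp (a * n) := by
    filter_upwards [hC] with ω hω
    filter_upwards [hω.2 (Set.Iio (a : EReal)) (isOpen_Iio.mem_nhds ha1),
      eventually_ge_atTop 1] with n hn hn1
    have hnR : (0:ℝ) < n := by exact_mod_cast hn1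
    apply matOpNorm'_le_of_unit (Real.exp_nonneg _)
    intro f hf
    have hmem := hn f hf
    rw [Set.mem_Iio, EReal.coe_lt_coe_iff] at hmem
    have hlog : Real.log ‖Matrix.toEuclideanLin (cocycIter T (fun ω' =>
        (C ω' : Matrix (Fin q) (Fin q) ℝ)) n ω) f‖ < a * n := (div_lt_iff₀ hnR).mp hmem
    rcases le_or_gt ‖Matrix.toEuclideanLin (cocycIter T (fun ω' =>
        (C ω' : Matrix (Fin q) (Fin q) ℝ)) n ω) f‖ 0 with h0 | h0
    · exact le_trans h0 (Real.exp_nonneg _)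
    · exact le_of_lt ((Real.log_lt_iff_lt_exp h0).mp hlog)
  have hUopn : Measurable fun ω => matOpNorm' (U ω) := by
    have hUmat : Measurable fun ω => (fun i j => U ω i j : Fin p → Fin q → ℝ) :=
      measurable_pi_lambda _ fun i => measurable_pi_lambda _ fun j => hUmeas i j
    have hlin : Continuous fun m : Matrix (Fin p) (Fin q) ℝ =>
        LinearMap.toContinuousLinearMap (Matrix.toEuclideanLin (𝕜 := ℝ) m) :=
      LinearMap.continuous_of_finiteDimensional
        ((LinearMap.toContinuousLinearMap :
            (EuclideanSpace ℝ (Fin q) →ₗ[ℝ] EuclideanSpace ℝ (Fin p)) ≃ₗ[ℝ] _).toLinearMap.comp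
          (Matrix.toEuclideanLin (𝕜 := ℝ)
            (m := Fin p) (n := Fin q)).toLinearMap)
    have hcont : Continuous fun m : Fin p → Fin q → ℝ => matOpNorm' (Matrix.of m) := hlin.norm
    exact hcont.measurable.comp hUmat
  have hg0 : ∀ ω, 0 ≤ max (Real.log (matOpNorm' (U ω))) 0 := fun ω => le_max_right _ _
  have hgm : Measurable fun ω => max (Real.log (matOpNorm' (U ω))) 0 :=
    hUopn.log.max measurable_const
  have hbc := ae_eventually_iterate_lt hT.toMeasurePreserving hgm hUint hg0 (half_pos hε₀)
  have hP3 : ∀ᵐ ω ∂μ, ∀ᶠ n : ℕ in atTop,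
      matOpNorm' (U (T^[n] ω)) ≤ Real.exp (ε₀ * n) := by
    filter_upwards [hbc] with ω hω
    filter_upwards [hω, eventually_ge_atTop 1] with n hn hn1
    have hnR : (1:ℝ) ≤ n := by exact_mod_cast hn1
    have hle : max (Real.log (matOpNorm' (U (T^[n] ω)))) 0 ≤ ε₀ * n := by
      nlinarith [hn, mul_nonneg hε₀.le (sub_nonneg.mpr hnR)]
    have h2 : Real.log (matOpNorm' (U (T^[n] ω))) ≤ ε₀ * n := le_trans (le_max_left _ _) hle
    rcases lt_or_ge 0 (matOpNorm' (U (T^[n] ω))) with h0 | h0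
    · calc matOpNorm' (U (T^[n] ω)) = Real.exp (Real.log (matOpNorm' (U (T^[n] ω)))) :=
            (Real.exp_log h0).symm
        _ ≤ Real.exp (ε₀ * n) := Real.exp_le_exp.mpr h2
    · exact le_trans h0 (Real.exp_pos _).le
  -- summability a.e.
  have hgap : a + ε₀ - bexp < 0 := by rw [hbexpdef, hε₀def]; linarith
  have hSummable : ∀ᵐ ω ∂μ, Summable (fun n => Fterm T
      (fun ω' => (B ω' : Matrix (Fin p) (Fin p) ℝ))
      (fun ω' => (C ω' : Matrix (Fin q) (Fin q) ℝ)) U n ω) := by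
    filter_upwards [hP1, hP2, hP3] with ω h1 h2 h3
    exact summable_Fterm hgap h1 h2 h3
  have hSummT : ∀ᵐ ω ∂μ, Summable (fun n => Fterm T
      (fun ω' => (B ω' : Matrix (Fin p) (Fin p) ℝ))
      (fun ω' => (C ω' : Matrix (Fin q) (Fin q) ℝ)) U n (T ω)) :=
    hT.toMeasurePreserving.quasiMeasurePreserving.tendsto_ae.eventually hSummable
  refine ⟨tauDef T (fun ω' => (B ω' : Matrix (Fin p) (Fin p) ℝ))
    (fun ω' => (C ω' : Matrix (Fin q) (Fin q) ℝ)) U, ?_, ?_, ?_⟩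
  · intro i j
    exact tauDef_measurable hTm hBmeas hCmeas hUmeas i j
  · filter_upwards [hSummable, hSummT] with ω h1 h2
    obtain ⟨S1, hS1⟩ := h1
    obtain ⟨S2, hS2⟩ := h2
    rw [tauDef_eq_of_hasSum hS1, tauDef_eq_of_hasSum hS2]
    exact cohomology_eq (fun ω' => ⟨B ω', rfl⟩) hS1 hS2
  · have hEq : ∀ᵐ ω ∂μ,
        (B ω : Matrix (Fin p) (Fin p) ℝ) * tauDef T
            (fun ω' => (B ω' : Matrix (Fin p) (Fin p) ℝ))
            (fun ω' => (C ω' : Matrix (Fin q) (Fin q) ℝ)) U ω + U ω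
          = tauDef T (fun ω' => (B ω' : Matrix (Fin p) (Fin p) ℝ))
            (fun ω' => (C ω' : Matrix (Fin q) (Fin q) ℝ)) U (T ω)
            * (C ω : Matrix (Fin q) (Fin q) ℝ) := by
      filter_upwards [hSummable, hSummT] with ω h1 h2
      obtain ⟨S1, hS1⟩ := h1
      obtain ⟨S2, hS2⟩ := h2
      rw [tauDef_eq_of_hasSum hS1, tauDef_eq_of_hasSum hS2]
      exact cohomology_eq (fun ω' => ⟨B ω', rfl⟩) hS1 hS2
    filter_upwards [hEq] with ω h
    exact splitting_algebra _ _ ⟨C ω, rfl⟩ _ _ _ h
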